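/- Let R be a commutative Noetherian ring, n, u > 0, d ≥ 1, k ≥ 2, and let A_1, …, A_u be pairwise distinct (k−1)-element subsets of [n]. Let y_{ij} ∈ R for i ∈ [n], j ∈ [d], and let T = R[y_{1,d+1}, …, y_{n,d+1}] be a polynomial ring over R in n new variables. Set m_{ij} = ∏_{ℓ ∈ A_i} y_{ℓj} for i ∈ [u], j ∈ [d+1]. Let M be the u × d matrix (m_{ij}) over R and let M' be the u × (d+1) matrix over T obtained from M by appending the column (m_{1,d+1}, …, m_{u,d+1})^T. Then for every 1 < t ≤ u, height I_t(M') ≥ min( height I_{t−1}(M), height I_t(M) + 1 ), where I_t denotes the ideal generated by all t × t minors (minors of size exceeding the matrix dimensions generate the zero ideal). -/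

import Mathlib

/-- The ideal `I_t(M)` generated by the `t × t` minors of a matrix `M`.  (If `t` exceeds a
dimension of `M`, every `t × t` submatrix has a repeated row or column, so the ideal is
zero.) -/
def minorsIdeal {R : Type*} [CommRing R] {u d : ℕ} (M : Matrix (Fin u) (Fin d) R)
    (t : ℕ) : Ideal R :=
  Ideal.span {x | ∃ (r : Fin t → Fin u) (c : Fin t → Fin d), x = (M.submatrix r c).det}

/-- The height of an ideal: the infimum of the heights of the prime ideals containing it. -/
noncomputable def idealHeight {R : Type*} [CommRing R] (I : Ideal R) : ℕ∞ :=
  ⨅ (P : PrimeSpectrum R) (_ : I ≤ P.asIdeal), Order.height P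

section Aux

variable {σ : Type*} {R : Type*} [CommRing R]

lemma mapC_isPrime (q : Ideal R) [q.IsPrime] :
    (Ideal.map (MvPolynomial.C : R →+* MvPolynomial σ R) q).IsPrime := by
  rw [← Ideal.Quotient.isDomain_iff_prime]
  exact Function.Injective.isDomain
    ((MvPolynomial.quotientEquivQuotientMvPolynomial (σ := σ) q).symm.toRingEquiv.toRingHom)
    (MvPolynomial.quotientEquivQuotientMvPolynomial (σ := σ) q).symm.injective

lemma comap_mapC (q : Ideal R) :
    (Ideal.map (MvPolynomial.C : R →+* MvPolynomial σ R) q).comap MvPolynomial.C = q := by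
  ext a
  simp only [Ideal.mem_comap, MvPolynomial.mem_map_C_iff]
  constructor
  · intro h
    simpa using h 0
  · intro h m
    classical
    rw [MvPolynomial.coeff_C]
    split <;> simp [h, q.zero_mem]

noncomputable def mapCSpec (σ : Type*) {R : Type*} [CommRing R] (p : PrimeSpectrum R) :
    PrimeSpectrum (MvPolynomial σ R) :=
  ⟨Ideal.map MvPolynomial.C p.asIdeal, mapC_isPrime p.asIdeal⟩

lemma mapCSpec_strictMono (σ : Type*) (R : Type*) [CommRing R] :
    StrictMono (mapCSpec σ (R := R)) := by
  intro a b hab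
  refine lt_of_le_of_ne ((PrimeSpectrum.asIdeal_le_asIdeal _ _).mp
    (Ideal.map_mono ((PrimeSpectrum.asIdeal_le_asIdeal _ _).mpr hab.le))) ?_
  intro h
  apply hab.ne
  ext1
  have hh := congrArg PrimeSpectrum.asIdeal h
  simp only [mapCSpec] at hh
  calc a.asIdeal = (Ideal.map (MvPolynomial.C : R →+* MvPolynomial σ R) a.asIdeal).comap
        MvPolynomial.C := (comap_mapC _).symm
    _ = (Ideal.map (MvPolynomial.C : R →+* MvPolynomial σ R) b.asIdeal).comap
        MvPolynomial.C := by rw [hh]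
    _ = b.asIdeal := comap_mapC _

lemma height_add_one_le' {α : Type*} [Preorder α] {b a : α} (h : b < a) :
    Order.height b + 1 ≤ Order.height a := by
  rcases eq_or_ne (Order.height b) ⊤ with hb | hb
  · have hmono := Order.height_mono h.le
    rw [hb, top_le_iff] at hmono
    rw [hb, hmono]
    simp
  · rw [ENat.add_one_le_iff hb]
    exact Order.height_strictMono h (lt_top_iff_ne_top.mpr hb)

lemma prodX_eq_monomial [DecidableEq σ] (S : Finset σ) :
    (∏ ℓ ∈ S, (MvPolynomial.X ℓ : MvPolynomial σ R)) =
      MvPolynomial.monomial (∑ ℓ ∈ S, Finsupp.single ℓ 1) 1 := by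
  induction S using Finset.induction with
  | empty => simp
  | insert _ _ h ih =>
      rw [Finset.prod_insert h, Finset.sum_insert h, ih, MvPolynomial.X,
        MvPolynomial.monomial_mul, one_mul]

lemma indicator_sum_inj [DecidableEq σ] {S T : Finset σ}
    (h : (∑ ℓ ∈ S, Finsupp.single ℓ 1 : σ →₀ ℕ) = ∑ ℓ ∈ T, Finsupp.single ℓ 1) : S = T := by
  ext a
  have h2 := DFunLike.congr_fun h a
  simp only [Finsupp.finset_sum_apply, Finsupp.single_apply, Finset.sum_ite_eq'] at h2
  by_cases hS : a ∈ S <;> by_cases hT : a ∈ T <;> simp [hS, hT] at h2 ⊢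

end Aux

/-- Let `A_1, …, A_u` be distinct `(k-1)`-subsets of `[n]`, let `M` be the `u × d` matrix
over the Noetherian ring `R` with entries `m_{ij} = ∏_{ℓ ∈ A_i} y_{ℓj}`, and let `M'` over
`T = R[y_{1,d+1}, …, y_{n,d+1}]` be obtained from `M` by appending the column with entries
`m_{i,d+1} = ∏_{ℓ ∈ A_i} y_{ℓ,d+1}` in the new variables.  Then for `1 < t ≤ u`,
`height I_t(M') ≥ min (height I_{t-1}(M)) (height I_t(M) + 1)`. -/
theorem height_minors_appended_column
    (R : Type*) [CommRing R] [IsNoetherianRing R] (n u d k : ℕ)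
    (hn : 0 < n) (hu : 0 < u) (hd : 1 ≤ d) (hk : 2 ≤ k)
    (A : Fin u → Finset (Fin n)) (hinj : Function.Injective A)
    (hcard : ∀ i, (A i).card = k - 1)
    (y : Fin n → Fin d → R)
    (M : Matrix (Fin u) (Fin d) R) (hM : ∀ i j, M i j = ∏ ℓ ∈ A i, y ℓ j)
    (M' : Matrix (Fin u) (Fin (d + 1)) (MvPolynomial (Fin n) R))
    (hM'c : ∀ i (j : Fin d), M' i j.castSucc = MvPolynomial.C (M i j))
    (hM'l : ∀ i, M' i (Fin.last d) = ∏ ℓ ∈ A i, MvPolynomial.X ℓ)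
    (t : ℕ) (ht1 : 1 < t) (htu : t ≤ u) :
    min (idealHeight (minorsIdeal M (t - 1))) (idealHeight (minorsIdeal M t) + 1)
      ≤ idealHeight (minorsIdeal M' t) := by
  classical
  obtain ⟨s, rfl⟩ : ∃ s, t = s + 1 := ⟨t - 1, by omega⟩
  simp only [Nat.add_sub_cancel]
  unfold idealHeight
  refine le_iInf fun P => le_iInf fun hP => ?_
  haveI := P.isPrime
  set pI : Ideal R := Ideal.comap MvPolynomial.C P.asIdeal with hpIdef
  haveI hpIprime : pI.IsPrime := Ideal.IsPrime.comap _
  set p : PrimeSpectrum R := ⟨pI, hpIprime⟩ with hpdef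
  -- all (s+1)-minors of M lie in pI
  have hsub : minorsIdeal M (s + 1) ≤ pI := by
    rw [minorsIdeal, Ideal.span_le]
    rintro x ⟨r, c, rfl⟩
    have hdet : (MvPolynomial.C : R →+* MvPolynomial (Fin n) R) ((M.submatrix r c).det)
        = (M'.submatrix r (fun j => (c j).castSucc)).det := by
      rw [RingHom.map_det]
      congr 1
      ext i j
      simp [Matrix.submatrix_apply, hM'c]
    have hmem : (M'.submatrix r (fun j => (c j).castSucc)).det ∈ minorsIdeal M' (s + 1) :=
      Ideal.subset_span ⟨r, fun j => (c j).castSucc, rfl⟩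
    exact Ideal.mem_comap.mpr (hdet ▸ hP hmem)
  have hmaple : mapCSpec (Fin n) p ≤ P :=
    (PrimeSpectrum.asIdeal_le_asIdeal _ _).mp Ideal.map_comap_le
  by_cases h1 : minorsIdeal M s ≤ pI
  · refine le_trans (min_le_left _ _) ?_
    refine le_trans (iInf₂_le p h1) ?_
    exact le_trans (Order.height_le_height_apply_of_strictMono _
      (mapCSpec_strictMono (Fin n) R) p) (Order.height_mono hmaple)
  · -- there is an s-minor of M not in pI
    have hns : ¬ {x | ∃ (r : Fin s → Fin u) (c : Fin s → Fin d),
        x = (M.submatrix r c).det} ⊆ (pI : Set R) := fun hss => h1 (Ideal.span_le.mpr hss)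
    obtain ⟨x, ⟨r', c', rfl⟩, hx⟩ := Set.not_subset.mp hns
    -- choose a row index not used by r'
    have hex : ∃ i0 : Fin u, ∀ j, r' j ≠ i0 := by
      by_contra hc
      push_neg at hc
      have hsurj : Function.Surjective r' := fun i => (hc i).imp fun j h => h
      have hle := Fintype.card_le_of_surjective r' hsurj
      simp only [Fintype.card_fin] at hle
      omega
    obtain ⟨i0, hi0⟩ := hex
    set rr : Fin (s + 1) → Fin u := Fin.snoc r' i0 with hrr
    set cc : Fin (s + 1) → Fin (d + 1) := Fin.snoc (fun j => (c' j).castSucc) (Fin.last d)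
      with hcc
    set D := M'.submatrix rr cc with hDdef
    have hDmem : D.det ∈ P.asIdeal := hP (Ideal.subset_span ⟨rr, cc, rfl⟩)
    set m0 : Fin n →₀ ℕ := ∑ ℓ ∈ A i0, Finsupp.single ℓ 1 with hm0
    -- the coefficient of m0 in det D is the chosen s-minor of M
    have hcoeff : MvPolynomial.coeff m0 D.det = (M.submatrix r' c').det := by
      rw [Matrix.det_succ_column D (Fin.last s), MvPolynomial.coeff_sum]
      have hterm : ∀ i : Fin (s + 1),
          MvPolynomial.coeff m0 ((-1) ^ ((i : ℕ) + ((Fin.last s : Fin (s + 1)) : ℕ))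
            * D i (Fin.last s)
            * (D.submatrix i.succAbove (Fin.last s).succAbove).det)
          = if i = Fin.last s then (M.submatrix r' c').det else 0 := by
        intro i
        have hlastcol : D i (Fin.last s) =
            MvPolynomial.monomial (∑ ℓ ∈ A (rr i), Finsupp.single ℓ 1) 1 := by
          show M' (rr i) (cc (Fin.last s)) = _
          rw [hcc]
          simp only [Fin.snoc_last]
          rw [hM'l, prodX_eq_monomial]
        have hinner : (D.submatrix i.succAbove (Fin.last s).succAbove).det
            = MvPolynomial.C ((M.submatrix (rr ∘ i.succAbove) c').det) := by
          rw [RingHom.map_det]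
          congr 1
          refine Matrix.ext fun a b => ?_
          show M' (rr (i.succAbove a)) (cc ((Fin.last s).succAbove b)) = _
          rw [Fin.succAbove_last, hcc]
          simp only [Fin.snoc_castSucc]
          rw [hM'c]
          rfl
        have hsgn : ((-1 : MvPolynomial (Fin n) R) ^ ((i : ℕ) + ((Fin.last s : Fin (s + 1)) : ℕ)))
            = MvPolynomial.C ((-1 : R) ^ ((i : ℕ) + s)) := by
          rw [Fin.val_last, map_pow, map_neg, map_one]
        rw [hlastcol, hinner, hsgn, MvPolynomial.C_mul_monomial, mul_one,
          mul_comm _ (MvPolynomial.C ((M.submatrix (rr ∘ i.succAbove) c').det)),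
          MvPolynomial.C_mul_monomial, MvPolynomial.coeff_monomial]
        by_cases hi : i = Fin.last s
        · subst hi
          have hrri : rr (Fin.last s) = i0 := by simp [hrr]
          have hcond : (∑ ℓ ∈ A (rr (Fin.last s)), Finsupp.single ℓ 1) = m0 := by
            rw [hrri, hm0]
          rw [if_pos hcond, if_pos rfl]
          have hrow : rr ∘ (Fin.last s).succAbove = r' := by
            funext a
            simp [Fin.succAbove_last, hrr, Fin.snoc_castSucc]
          rw [hrow]
          have h2 : ((-1 : R) ^ (((Fin.last s : Fin (s + 1)) : ℕ) + s)) = 1 := by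
            rw [Fin.val_last]
            exact Even.neg_one_pow ⟨s, rfl⟩
          rw [h2, mul_one]
        · have hcond : ¬ ((∑ ℓ ∈ A (rr i), Finsupp.single ℓ 1) = m0) := by
            intro heq
            have hAA : A (rr i) = A i0 := indicator_sum_inj (by rw [heq, hm0])
            have : rr i = i0 := hinj hAA
            obtain ⟨j, rfl⟩ := Fin.exists_castSucc_eq.mpr hi
            rw [hrr, Fin.snoc_castSucc] at this
            exact hi0 j this
          rw [if_neg hcond, if_neg hi]
      rw [Finset.sum_congr rfl fun i _ => hterm i]
      simp
    have hnotin : D.det ∉ Ideal.map (MvPolynomial.C : R →+* MvPolynomial (Fin n) R) pI := by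
      intro hmem
      exact hx (by simpa [hcoeff] using MvPolynomial.mem_map_C_iff.mp hmem m0)
    have hlt : mapCSpec (Fin n) p < P := by
      refine lt_of_le_of_ne hmaple ?_
      intro heq
      apply hnotin
      have hasideal : (mapCSpec (Fin n) p).asIdeal = P.asIdeal := congrArg _ heq
      rw [show (mapCSpec (Fin n) p).asIdeal
        = Ideal.map (MvPolynomial.C : R →+* MvPolynomial (Fin n) R) pI from rfl] at hasideal
      rw [hasideal]
      exact hDmem
    refine le_trans (min_le_right _ _) ?_
    refine le_trans (add_le_add_left (iInf₂_le p hsub) 1) ?_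
    refine le_trans (add_le_add_left (Order.height_le_height_apply_of_strictMono _
      (mapCSpec_strictMono (Fin n) R) p) 1) ?_
    exact height_add_one_le' hlt
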